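/- Under the hypotheses of the quantum policy iteration error bound, if in addition ‖q̂^{π_t} − q^{π_t}‖_∞ ≤ ε holds for every iteration t, then limsup_{t→∞} ‖ |Q*⟩ − |Q^{π_t}⟩ ‖_ρ ≤ 2√2 · γ Γ² · ε. -/

import Mathlib

open Filter
noncomputable def l2norm {ι : Type*} [Fintype ι] (v : ι → ℝ) : ℝ :=
  Real.sqrt (∑ i, v i ^ 2)
lemma sum_prob_le {S : Type*} [Fintype S] (q : S → ℝ) (hq0 : ∀ s, 0 ≤ q s)
    (hq1 : ∑ s, q s = 1) (w : S → ℝ) (K : ℝ) (hw : ∀ s, w s ≤ K) :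
    ∑ s, q s * w s ≤ K := by
  calc ∑ s, q s * w s ≤ ∑ s, q s * K :=
        Finset.sum_le_sum fun s _ => mul_le_mul_of_nonneg_left (hw s) (hq0 s)
    _ = K := by rw [← Finset.sum_mul, hq1, one_mul]

lemma sum_prob_ge {S : Type*} [Fintype S] (q : S → ℝ) (hq0 : ∀ s, 0 ≤ q s)
    (hq1 : ∑ s, q s = 1) (w : S → ℝ) (K : ℝ) (hw : ∀ s, K ≤ w s) :
    K ≤ ∑ s, q s * w s := by
  calc K = ∑ s, q s * K := by rw [← Finset.sum_mul, hq1, one_mul]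
    _ ≤ ∑ s, q s * w s :=
        Finset.sum_le_sum fun s _ => mul_le_mul_of_nonneg_left (hw s) (hq0 s)

lemma sum_prob_le_add {S : Type*} [Fintype S] (q : S → ℝ) (hq0 : ∀ s, 0 ≤ q s)
    (hq1 : ∑ s, q s = 1) (w w2 : S → ℝ) (c : ℝ) (hw : ∀ s, w s ≤ w2 s + c) :
    ∑ s, q s * w s ≤ (∑ s, q s * w2 s) + c := by
  have : ∑ s, q s * w s ≤ ∑ s, (q s * w2 s + q s * c) := by
    refine Finset.sum_le_sum fun s _ => ?_
    have := mul_le_mul_of_nonneg_left (hw s) (hq0 s)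
    linarith [this, (mul_add (q s) (w2 s) c)]
  rw [Finset.sum_add_distrib, ← Finset.sum_mul, hq1, one_mul] at this
  exact this

lemma l2norm_nonneg {ι : Type*} [Fintype ι] (v : ι → ℝ) : 0 ≤ l2norm v :=
  Real.sqrt_nonneg _

lemma l2norm_mono {ι : Type*} [Fintype ι] (u v : ι → ℝ) (h0 : ∀ i, 0 ≤ u i)
    (h : ∀ i, u i ≤ v i) : l2norm u ≤ l2norm v :=
  Real.sqrt_le_sqrt (Finset.sum_le_sum fun i _ => pow_le_pow_left₀ (h0 i) (h i) 2)

lemma l2norm_pos {ι : Type*} [Fintype ι] [Nonempty ι] (v : ι → ℝ) (h : ∀ i, 0 < v i) :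
    0 < l2norm v :=
  Real.sqrt_pos.2 (Finset.sum_pos (fun i _ => pow_pos (h i) 2) Finset.univ_nonempty)

lemma l2norm_le_sqrt_card {ι : Type*} [Fintype ι] (v : ι → ℝ) (K : ℝ) (hK : 0 ≤ K)
    (h : ∀ i, |v i| ≤ K) : l2norm v ≤ Real.sqrt (Fintype.card ι) * K := by
  have h1 : ∑ i, v i ^ 2 ≤ ∑ _i : ι, K ^ 2 := by
    refine Finset.sum_le_sum fun i _ => ?_
    have := sq_abs (v i)
    nlinarith [h i, abs_nonneg (v i)]
  have h2 : (∑ _i : ι, K ^ 2) = (Fintype.card ι : ℝ) * K ^ 2 := by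
    rw [Finset.sum_const, Finset.card_univ, nsmul_eq_mul]
  calc l2norm v ≤ Real.sqrt ((Fintype.card ι : ℝ) * K ^ 2) := by
        rw [← h2]; exact Real.sqrt_le_sqrt h1
    _ = Real.sqrt (Fintype.card ι) * K := by
        rw [Real.sqrt_mul (by positivity), Real.sqrt_sq hK]

lemma norm_normalize_sub {ι : Type*} [Fintype ι] (u v : ι → ℝ)
    (hu : ∀ i, 0 ≤ u i) (hv : ∀ i, 0 ≤ v i)
    (hb : 0 < l2norm v) (hba : l2norm v ≤ l2norm u) :
    l2norm ((l2norm u)⁻¹ • u - (l2norm v)⁻¹ • v) ≤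
      Real.sqrt 2 * l2norm (u - v) / l2norm u := by
  set a := l2norm u with ha_def
  set b := l2norm v with hb_def
  have ha : 0 < a := lt_of_lt_of_le hb hba
  have hA : a ^ 2 = ∑ i, u i ^ 2 := Real.sq_sqrt (by positivity)
  have hB : b ^ 2 = ∑ i, v i ^ 2 := Real.sq_sqrt (by positivity)
  set c := ∑ i, u i * v i with hc_def
  have hc0 : 0 ≤ c := Finset.sum_nonneg fun i _ => mul_nonneg (hu i) (hv i)
  have hcab : c ≤ a * b := by
    have hcs := Finset.sum_mul_sq_le_sq_mul_sq Finset.univ u v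
    rw [← hA, ← hB] at hcs
    nlinarith [hcs, hc0, mul_pos ha hb]
  -- expansions
  have e1 : ∑ i, ((l2norm u)⁻¹ • u - (l2norm v)⁻¹ • v) i ^ 2
      = a⁻¹ ^ 2 * (∑ i, u i ^ 2) - 2 * (a⁻¹ * b⁻¹) * c + b⁻¹ ^ 2 * (∑ i, v i ^ 2) := by
    have step : ∀ i, ((l2norm u)⁻¹ • u - (l2norm v)⁻¹ • v) i ^ 2
        = a⁻¹ ^ 2 * u i ^ 2 - 2 * (a⁻¹ * b⁻¹) * (u i * v i) + b⁻¹ ^ 2 * v i ^ 2 := by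
      intro i
      simp only [Pi.sub_apply, Pi.smul_apply, smul_eq_mul, ← ha_def, ← hb_def]
      ring
    rw [Finset.sum_congr rfl fun i _ => step i, Finset.sum_add_distrib,
      Finset.sum_sub_distrib, ← Finset.mul_sum, ← Finset.mul_sum, ← Finset.mul_sum, hc_def]
  have e2 : ∑ i, (u - v) i ^ 2 = (∑ i, u i ^ 2) - 2 * c + (∑ i, v i ^ 2) := by
    have step : ∀ i, (u - v) i ^ 2 = u i ^ 2 - 2 * (u i * v i) + v i ^ 2 := by
      intro i; simp only [Pi.sub_apply]; ring
    rw [Finset.sum_congr rfl fun i _ => step i, Finset.sum_add_distrib,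
      Finset.sum_sub_distrib, ← Finset.mul_sum, hc_def]
  -- key algebraic inequality
  have core : c * (2 * b - a) ≤ b ^ 3 := by
    rcases le_total a (2 * b) with h | h
    · nlinarith [mul_nonneg (sub_nonneg.2 hcab) (sub_nonneg.2 h),
        mul_nonneg hb.le (sq_nonneg (a - b))]
    · nlinarith [mul_nonneg hc0 (sub_nonneg.2 h), pow_pos hb 3]
  have key : a⁻¹ ^ 2 * (∑ i, u i ^ 2) - 2 * (a⁻¹ * b⁻¹) * c + b⁻¹ ^ 2 * (∑ i, v i ^ 2)
      ≤ 2 * ((∑ i, u i ^ 2) - 2 * c + (∑ i, v i ^ 2)) / a ^ 2 := by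
    rw [← hA, ← hB]
    have ha' : a ≠ 0 := ha.ne'
    have hb' : b ≠ 0 := hb.ne'
    have L : a⁻¹ ^ 2 * a ^ 2 - 2 * (a⁻¹ * b⁻¹) * c + b⁻¹ ^ 2 * b ^ 2
        = (2 * (a * b) - 2 * c) / (a * b) := by
      field_simp
      ring
    rw [L, div_le_div_iff₀ (mul_pos ha hb) (by positivity : (0:ℝ) < a ^ 2)]
    nlinarith [mul_le_mul_of_nonneg_left core (by positivity : (0:ℝ) ≤ 2 * a)]
  have hX : (0:ℝ) ≤ (∑ i, u i ^ 2) - 2 * c + (∑ i, v i ^ 2) := by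
    rw [← e2]; positivity
  calc l2norm ((l2norm u)⁻¹ • u - (l2norm v)⁻¹ • v)
      = Real.sqrt (∑ i, ((l2norm u)⁻¹ • u - (l2norm v)⁻¹ • v) i ^ 2) := rfl
    _ ≤ Real.sqrt (2 * ((∑ i, u i ^ 2) - 2 * c + (∑ i, v i ^ 2)) / a ^ 2) := by
        refine Real.sqrt_le_sqrt ?_
        rw [e1]; exact key
    _ = Real.sqrt 2 * l2norm (u - v) / a := by
        rw [Real.sqrt_div (by positivity) (a ^ 2), Real.sqrt_sq ha.le,
          Real.sqrt_mul (by norm_num : (0:ℝ) ≤ 2)]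
        rw [l2norm, e2]

/-- Under the hypotheses of the quantum policy iteration error bound, if moreover
`‖q̂^{π_t} - q^{π_t}‖_∞ ≤ ε` for every iteration `t`, then
`limsup ‖|Q*⟩ - |Q^{π_t}⟩‖_ρ ≤ 2√2 γΓ² ε`. -/
theorem quantum_policy_iteration_eps_bound
    {S A : Type*} [Fintype S] [Fintype A] [Nonempty S] [Nonempty A]
    (p : S → A → S → ℝ) (hp0 : ∀ s a s', 0 ≤ p s a s')
    (hp1 : ∀ s a, ∑ s', p s a s' = 1)
    (r : S × A → ℝ) (hr0 : ∀ x, 0 < r x) (hr1 : ∀ x, r x ≤ 1)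
    (γ : ℝ) (hγ0 : 0 < γ) (hγ1 : γ < 1)
    (Qf : (S → A) → S × A → ℝ)
    (hQf : ∀ (π : S → A) (s : S) (a : A),
      Qf π (s, a) = r (s, a) + γ * ∑ s', p s a s' * Qf π (s', π s'))
    (Qstar : S × A → ℝ) (hQstar : ∀ x, Qstar x = ⨆ π : S → A, Qf π x)
    (πs : ℕ → S → A) (qhat : ℕ → S × A → ℝ)
    (hunit : ∀ t, l2norm (qhat t) = 1) (hnonneg : ∀ t x, 0 ≤ qhat t x)
    (hgreedy : ∀ (t : ℕ) (s : S) (a : A), qhat t (s, a) ≤ qhat t (s, πs (t + 1) s))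
    (ε : ℝ)
    (heps : ∀ t : ℕ, ‖qhat t - (l2norm (Qf (πs t)))⁻¹ • Qf (πs t)‖ ≤ ε) :
    Filter.limsup
        (fun t : ℕ =>
          l2norm ((l2norm Qstar)⁻¹ • Qstar - (l2norm (Qf (πs t)))⁻¹ • Qf (πs t)) /
            Real.sqrt (Fintype.card S * Fintype.card A))
        Filter.atTop ≤
      2 * Real.sqrt 2 * γ * (1 / (1 - γ)) ^ 2 * ε := by
  have h1γ : 0 < 1 - γ := by linarith
  set Γr : ℝ := 1 / (1 - γ) with hΓr
  have hΓpos : 0 < Γr := by positivity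
  -- upper bound on value functions
  have Qle : ∀ π : S → A, ∀ x : S × A, Qf π x ≤ Γr := by
    intro π
    obtain ⟨⟨s, a⟩, hx₀⟩ := Finite.exists_max (Qf π)
    have hsum : ∑ s', p s a s' * Qf π (s', π s') ≤ Qf π (s, a) :=
      sum_prob_le _ (hp0 s a) (hp1 s a) _ _ (fun s' => hx₀ (s', π s'))
    have h2 := mul_le_mul_of_nonneg_left hsum hγ0.le
    have hQe := hQf π s a
    have hΓ : Qf π (s, a) ≤ Γr := by
      rw [hΓr, le_div_iff₀ h1γ]
      nlinarith [hr1 (s, a)]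
    exact fun x => (hx₀ x).trans hΓ
  -- positivity of value functions
  have Qpos : ∀ π : S → A, ∀ x : S × A, 0 < Qf π x := by
    intro π
    obtain ⟨⟨s, a⟩, hx₁⟩ := Finite.exists_min (Qf π)
    have hsum : Qf π (s, a) ≤ ∑ s', p s a s' * Qf π (s', π s') :=
      sum_prob_ge _ (hp0 s a) (hp1 s a) _ _ (fun s' => hx₁ (s', π s'))
    have h2 := mul_le_mul_of_nonneg_left hsum hγ0.le
    have hQe := hQf π s a
    have hpos : 0 < Qf π (s, a) := by nlinarith [hr0 (s, a)]
    exact fun x => lt_of_lt_of_le hpos (hx₁ x)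
  have bddQ : ∀ x : S × A, BddAbove (Set.range fun π : S → A => Qf π x) :=
    fun x => Set.Finite.bddAbove (Set.finite_range _)
  have QleStar : ∀ (π : S → A) (x : S × A), Qf π x ≤ Qstar x := by
    intro π x
    rw [hQstar]
    exact le_ciSup (bddQ x) π
  have QstarLe : ∀ x, Qstar x ≤ Γr := by
    intro x
    rw [hQstar]
    exact ciSup_le fun π => Qle π x
  have Qstarpos : ∀ x, 0 < Qstar x :=
    fun x => lt_of_lt_of_le (Qpos (Classical.arbitrary _) x) (QleStar _ x)
  set M := l2norm Qstar with hM_def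
  have hMpos : 0 < M := l2norm_pos _ Qstarpos
  have hM' : M ≠ 0 := hMpos.ne'
  have hNle : ∀ t, l2norm (Qf (πs t)) ≤ M := fun t =>
    l2norm_mono _ _ (fun x => (Qpos _ x).le) (fun x => QleStar _ x)
  have hNpos : ∀ t, 0 < l2norm (Qf (πs t)) := fun t => l2norm_pos _ (Qpos _)
  have hε0 : 0 ≤ ε := le_trans (norm_nonneg _) (heps 0)
  set e := ε * M with he_def
  have he0 : 0 ≤ e := mul_nonneg hε0 hMpos.le
  -- sup-norm closeness in the Q-scale
  have hclose : ∀ t x, |Qf (πs t) x - l2norm (Qf (πs t)) * qhat t x| ≤ e := by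
    intro t x
    have hN := hNpos t
    have hN' : l2norm (Qf (πs t)) ≠ 0 := hN.ne'
    have h1 : |qhat t x - (l2norm (Qf (πs t)))⁻¹ * Qf (πs t) x| ≤ ε := by
      have h := norm_le_pi_norm (qhat t - (l2norm (Qf (πs t)))⁻¹ • Qf (πs t)) x
      simp only [Pi.sub_apply, Pi.smul_apply, smul_eq_mul, Real.norm_eq_abs] at h
      exact h.trans (heps t)
    have key : l2norm (Qf (πs t)) * (qhat t x - (l2norm (Qf (πs t)))⁻¹ * Qf (πs t) x)
        = l2norm (Qf (πs t)) * qhat t x - Qf (πs t) x := by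
      field_simp
    rw [abs_sub_comm, ← key, abs_mul, abs_of_pos hN]
    calc l2norm (Qf (πs t)) * |qhat t x - (l2norm (Qf (πs t)))⁻¹ * Qf (πs t) x|
        ≤ l2norm (Qf (πs t)) * ε := mul_le_mul_of_nonneg_left h1 hN.le
      _ ≤ M * ε := mul_le_mul_of_nonneg_right (hNle t) hε0
      _ = e := by rw [he_def]; ring
  -- greedy property in the Q-scale
  have hgreedyQ : ∀ t (s : S) (b : A),
      Qf (πs t) (s, b) ≤ Qf (πs t) (s, πs (t + 1) s) + 2 * e := by
    intro t s b
    have a1 := abs_le.mp (hclose t (s, b))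
    have a2 := abs_le.mp (hclose t (s, πs (t + 1) s))
    have h3 : l2norm (Qf (πs t)) * qhat t (s, b)
        ≤ l2norm (Qf (πs t)) * qhat t (s, πs (t + 1) s) :=
      mul_le_mul_of_nonneg_left (hgreedy t s b) (hNpos t).le
    linarith [a1.1, a1.2, a2.1, a2.2]
  -- the optimality gap
  set δ : ℕ → ℝ := fun t => ⨆ x : S × A, (Qstar x - Qf (πs t) x) with hδ_def
  have bddδ : ∀ t, BddAbove (Set.range fun x : S × A => Qstar x - Qf (πs t) x) :=
    fun t => Set.Finite.bddAbove (Set.finite_range _)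
  have hδle : ∀ t x, Qstar x - Qf (πs t) x ≤ δ t := fun t x => le_ciSup (bddδ t) x
  have hδ0 : ∀ t, 0 ≤ δ t := by
    intro t
    have h := hδle t (Classical.arbitrary _)
    have := QleStar (πs t) (Classical.arbitrary _)
    linarith
  have hδΓ : ∀ t, δ t ≤ Γr := by
    intro t
    rw [hδ_def]
    exact ciSup_le fun x => by linarith [QstarLe x, Qpos (πs t) x]
  -- the approximate policy iteration recursion
  have hrec : ∀ t, δ (t + 1) ≤ γ * δ t + 2 * γ * e / (1 - γ) := by
    intro t
    have bddE : BddAbove (Set.range fun x : S × A =>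
        (r x + γ * ∑ s', p x.1 x.2 s' * Qf (πs t) (s', πs (t + 1) s')) - Qf (πs (t + 1)) x) :=
      Set.Finite.bddAbove (Set.finite_range _)
    set E : ℝ := ⨆ x : S × A,
        ((r x + γ * ∑ s', p x.1 x.2 s' * Qf (πs t) (s', πs (t + 1) s')) - Qf (πs (t + 1)) x)
      with hE_def
    have hEle : ∀ (s : S) (a : A),
        (r (s, a) + γ * ∑ s', p s a s' * Qf (πs t) (s', πs (t + 1) s'))
          - Qf (πs (t + 1)) (s, a) ≤ E :=
      fun s a => le_ciSup bddE (s, a)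
    have F2 : ∀ (s : S) (a : A), Qf (πs t) (s, a)
        ≤ (r (s, a) + γ * ∑ s', p s a s' * Qf (πs t) (s', πs (t + 1) s')) + 2 * γ * e := by
      intro s a
      have hsum : ∑ s', p s a s' * Qf (πs t) (s', πs t s')
          ≤ (∑ s', p s a s' * Qf (πs t) (s', πs (t + 1) s')) + 2 * e :=
        sum_prob_le_add _ (hp0 s a) (hp1 s a) _ _ _ (fun s' => hgreedyQ t s' (πs t s'))
      have h2 := mul_le_mul_of_nonneg_left hsum hγ0.le
      rw [mul_add] at h2
      have hQe := hQf (πs t) s a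
      linarith
    have hEub : E ≤ 2 * γ ^ 2 * e / (1 - γ) := by
      have step : ∀ (s : S) (a : A),
          (r (s, a) + γ * ∑ s', p s a s' * Qf (πs t) (s', πs (t + 1) s'))
            - Qf (πs (t + 1)) (s, a) ≤ γ * (2 * γ * e) + γ * E := by
        intro s a
        have hQ'e := hQf (πs (t + 1)) s a
        have hsum : ∑ s', p s a s' * Qf (πs t) (s', πs (t + 1) s')
            ≤ (∑ s', p s a s' * Qf (πs (t + 1)) (s', πs (t + 1) s')) + (2 * γ * e + E) := by
          refine sum_prob_le_add _ (hp0 s a) (hp1 s a) _ _ _ (fun s' => ?_)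
          have hA := F2 s' (πs (t + 1) s')
          have hB := hEle s' (πs (t + 1) s')
          linarith
        have h2 := mul_le_mul_of_nonneg_left hsum hγ0.le
        rw [mul_add] at h2
        nlinarith
      have hth : E ≤ γ * (2 * γ * e) + γ * E := by
        rw [hE_def]
        refine ciSup_le fun x => ?_
        obtain ⟨s, a⟩ := x
        exact step s a
      rw [le_div_iff₀ h1γ]
      nlinarith
    have F4 : ∀ (s : S) (a : A), Qstar (s, a)
        ≤ (r (s, a) + γ * ∑ s', p s a s' * Qf (πs t) (s', πs (t + 1) s'))
          + (γ * δ t + γ * (2 * e)) := by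
      intro s a
      rw [hQstar]
      refine ciSup_le fun π => ?_
      have hQe := hQf π s a
      have hsum : ∑ s', p s a s' * Qf π (s', π s')
          ≤ (∑ s', p s a s' * Qf (πs t) (s', πs (t + 1) s')) + (δ t + 2 * e) := by
        refine sum_prob_le_add _ (hp0 s a) (hp1 s a) _ _ _ (fun s' => ?_)
        have h1 : Qf π (s', π s') ≤ Qstar (s', π s') := QleStar π _
        have h2 : Qstar (s', π s') - Qf (πs t) (s', π s') ≤ δ t := hδle t _
        have h3 := hgreedyQ t s' (π s')
        linarith
      have h2 := mul_le_mul_of_nonneg_left hsum hγ0.le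
      rw [mul_add] at h2
      nlinarith
    have heq : γ * (2 * e) + 2 * γ ^ 2 * e / (1 - γ) = 2 * γ * e / (1 - γ) := by
      field_simp
      ring
    have main : ∀ (s : S) (a : A), Qstar (s, a) - Qf (πs (t + 1)) (s, a)
        ≤ γ * δ t + 2 * γ * e / (1 - γ) := by
      intro s a
      have h1 := F4 s a
      have h2 := hEle s a
      linarith [hEub]
    rw [hδ_def]
    refine ciSup_le fun x => ?_
    obtain ⟨s, a⟩ := x
    exact main s a
  -- explicit bound by induction
  set C' := 2 * γ * e / (1 - γ) ^ 2 with hC'_def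
  have hC'0 : 0 ≤ C' := by positivity
  have hδbound : ∀ t, δ t ≤ γ ^ t * Γr + C' := by
    intro t
    induction t with
    | zero =>
      simp only [pow_zero, one_mul]
      linarith [hδΓ 0]
    | succ n ih =>
      have h1 := hrec n
      have h2 : γ * δ n ≤ γ * (γ ^ n * Γr + C') := mul_le_mul_of_nonneg_left ih hγ0.le
      have h3 : γ * (γ ^ n * Γr + C') + 2 * γ * e / (1 - γ) = γ ^ (n + 1) * Γr + C' := by
        rw [hC'_def]
        field_simp
        ring
      linarith
  -- cardinality bookkeeping
  have hcS : (0:ℝ) < (Fintype.card S : ℝ) := by exact_mod_cast Fintype.card_pos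
  have hcA : (0:ℝ) < (Fintype.card A : ℝ) := by exact_mod_cast Fintype.card_pos
  have hsc : (0:ℝ) < Real.sqrt ((Fintype.card S : ℝ) * (Fintype.card A : ℝ)) :=
    Real.sqrt_pos.2 (mul_pos hcS hcA)
  have hsc' : Real.sqrt ((Fintype.card (S × A) : ℝ))
      = Real.sqrt ((Fintype.card S : ℝ) * (Fintype.card A : ℝ)) := by
    rw [Fintype.card_prod, Nat.cast_mul]
  -- pointwise bound on the normalized error
  have hfb : ∀ t, l2norm (M⁻¹ • Qstar - (l2norm (Qf (πs t)))⁻¹ • Qf (πs t)) /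
      Real.sqrt ((Fintype.card S : ℝ) * (Fintype.card A : ℝ))
      ≤ Real.sqrt 2 / M * (γ ^ t * Γr + C') := by
    intro t
    have hA : l2norm (M⁻¹ • Qstar - (l2norm (Qf (πs t)))⁻¹ • Qf (πs t))
        ≤ Real.sqrt 2 * l2norm (Qstar - Qf (πs t)) / M :=
      norm_normalize_sub Qstar (Qf (πs t)) (fun x => (Qstarpos x).le)
        (fun x => (Qpos _ x).le) (hNpos t) (hNle t)
    have hd : l2norm (Qstar - Qf (πs t))
        ≤ Real.sqrt ((Fintype.card (S × A) : ℝ)) * δ t := by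
      refine l2norm_le_sqrt_card _ _ (hδ0 t) fun x => ?_
      rw [Pi.sub_apply, abs_le]
      have h0 : 0 ≤ Qstar x - Qf (πs t) x := by linarith [QleStar (πs t) x]
      exact ⟨by linarith [hδ0 t], hδle t x⟩
    rw [hsc'] at hd
    have step1 : l2norm (M⁻¹ • Qstar - (l2norm (Qf (πs t)))⁻¹ • Qf (πs t))
        ≤ Real.sqrt 2 * (Real.sqrt ((Fintype.card S : ℝ) * (Fintype.card A : ℝ)) * δ t) / M := by
      refine hA.trans ?_
      refine (div_le_div_iff_of_pos_right hMpos).2 ?_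
      exact mul_le_mul_of_nonneg_left hd (Real.sqrt_nonneg 2)
    have step2 : l2norm (M⁻¹ • Qstar - (l2norm (Qf (πs t)))⁻¹ • Qf (πs t)) /
          Real.sqrt ((Fintype.card S : ℝ) * (Fintype.card A : ℝ))
        ≤ (Real.sqrt 2 * (Real.sqrt ((Fintype.card S : ℝ) * (Fintype.card A : ℝ)) * δ t) / M) /
          Real.sqrt ((Fintype.card S : ℝ) * (Fintype.card A : ℝ)) :=
      (div_le_div_iff_of_pos_right hsc).2 step1
    have step3 : (Real.sqrt 2 * (Real.sqrt ((Fintype.card S : ℝ) * (Fintype.card A : ℝ)) * δ t) / M) /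
          Real.sqrt ((Fintype.card S : ℝ) * (Fintype.card A : ℝ))
        = Real.sqrt 2 / M * δ t := by
      field_simp
    rw [step3] at step2
    refine step2.trans ?_
    exact mul_le_mul_of_nonneg_left (hδbound t) (by positivity)
  -- pass to the limit superior
  set b : ℕ → ℝ := fun t => Real.sqrt 2 / M * (γ ^ t * Γr + C') with hb_def
  have htb : Tendsto b atTop (nhds (Real.sqrt 2 / M * (0 * Γr + C'))) := by
    rw [hb_def]
    exact (((tendsto_pow_atTop_nhds_zero_of_lt_one hγ0.le hγ1).mul_const Γr).add_const
      C').const_mul _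
  have hf0 : ∀ t : ℕ, (0:ℝ) ≤
      l2norm (M⁻¹ • Qstar - (l2norm (Qf (πs t)))⁻¹ • Qf (πs t)) /
        Real.sqrt ((Fintype.card S : ℝ) * (Fintype.card A : ℝ)) :=
    fun t => div_nonneg (l2norm_nonneg _) (Real.sqrt_nonneg _)
  have hco : IsCoboundedUnder (· ≤ ·) atTop (fun t : ℕ =>
      l2norm (M⁻¹ • Qstar - (l2norm (Qf (πs t)))⁻¹ • Qf (πs t)) /
        Real.sqrt ((Fintype.card S : ℝ) * (Fintype.card A : ℝ))) :=
    IsBoundedUnder.isCoboundedUnder_le (isBoundedUnder_of ⟨0, fun t => hf0 t⟩)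
  have hbd : IsBoundedUnder (· ≤ ·) atTop b := htb.isBoundedUnder_le
  have hlsle : Filter.limsup (fun t : ℕ =>
      l2norm (M⁻¹ • Qstar - (l2norm (Qf (πs t)))⁻¹ • Qf (πs t)) /
        Real.sqrt ((Fintype.card S : ℝ) * (Fintype.card A : ℝ))) atTop
      ≤ Filter.limsup b atTop :=
    limsup_le_limsup (Eventually.of_forall hfb) hco hbd
  rw [htb.limsup_eq] at hlsle
  refine hlsle.trans (le_of_eq ?_)
  rw [hC'_def, he_def, hΓr]
  rw [div_mul_eq_mul_div, div_eq_iff hM']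
  field_simp
  ring
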